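/- arXiv:2409.17505 — 2 statements merged into one kernel-verified Lean document; each statement's English description precedes it below -/
import Mathlib

section
/- Suppose E[‖ξ(X_1)‖_H²] < ∞ and E[M(X_1)] < ∞, and define g*(x) = E[h(X_1, x)] / E[M(X_1)]. Then almost surely (1/t) Σ_{i=1}^{t} g_i(X_i)² → E[g*(X_1)²] as t → ∞. -/
open MeasureTheory ProbabilityTheory Filter
open scoped RealInnerProductSpace Topology

lemma sum_Icc_one_eq {α : Type*} [AddCommMonoid α] (f : ℕ → α) (t : ℕ) :
    ∑ i ∈ Finset.Icc 1 t, f i = ∑ j ∈ Finset.range t, f (j + 1) := by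
  rw [← Finset.Ico_add_one_right_eq_Icc, Finset.sum_Ico_eq_sum_range]
  simp only [Nat.add_sub_cancel]
  exact Finset.sum_congr rfl fun j _ => by rw [Nat.add_comm]

lemma weighted_cesaro (δ w : ℕ → ℝ) (hδ0 : ∀ n, 0 ≤ δ n) (hw0 : ∀ n, 0 ≤ w n)
    (hδ : Tendsto δ atTop (𝓝 0)) {q : ℝ}
    (hw : Tendsto (fun t : ℕ => (1 / (t : ℝ)) * ∑ i ∈ Finset.range t, w i) atTop (𝓝 q)) :
    Tendsto (fun t : ℕ => (1 / (t : ℝ)) * ∑ i ∈ Finset.range t, δ i * w i) atTop (𝓝 0) := by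
  have hq0 : 0 ≤ q := by
    apply ge_of_tendsto hw
    filter_upwards with t
    exact mul_nonneg (by positivity) (Finset.sum_nonneg fun i _ => hw0 i)
  rw [NormedAddCommGroup.tendsto_nhds_zero]
  intro ε hε
  have hq1 : 0 < q + 1 := by linarith
  set ε' : ℝ := ε / (2 * (q + 1)) with hε'def
  have hε' : 0 < ε' := by positivity
  obtain ⟨N, hN⟩ := (hδ.eventually (gt_mem_nhds hε')).exists_forall_of_atTop
  have havg : ∀ᶠ t : ℕ in atTop, (1 / (t : ℝ)) * ∑ i ∈ Finset.range t, w i < q + 1 :=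
    hw.eventually (gt_mem_nhds (show q < q + 1 by linarith))
  have hA : Tendsto (fun t : ℕ => (1 / (t : ℝ)) * ∑ i ∈ Finset.range N, δ i * w i)
      atTop (𝓝 0) := by
    simpa using (tendsto_one_div_atTop_nhds_zero_nat).mul_const
      (∑ i ∈ Finset.range N, δ i * w i)
  have hAev : ∀ᶠ t : ℕ in atTop,
      (1 / (t : ℝ)) * ∑ i ∈ Finset.range N, δ i * w i < ε / 2 := by
    have := hA.eventually (gt_mem_nhds (show (0:ℝ) < ε / 2 by positivity))
    simpa using this
  filter_upwards [havg, hAev, eventually_ge_atTop N] with t h1 h2 h3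
  have ht0 : (0:ℝ) ≤ 1 / (t : ℝ) := by positivity
  have hsplit : ∑ i ∈ Finset.range t, δ i * w i
      = ∑ i ∈ Finset.range N, δ i * w i + ∑ i ∈ Finset.Ico N t, δ i * w i := by
    rw [Finset.range_eq_Ico, Finset.range_eq_Ico]
    exact (Finset.sum_Ico_consecutive (f := fun i => δ i * w i) (Nat.zero_le N) h3).symm
  have htail : ∑ i ∈ Finset.Ico N t, δ i * w i ≤ ε' * ∑ i ∈ Finset.range t, w i := by
    calc ∑ i ∈ Finset.Ico N t, δ i * w i
        ≤ ∑ i ∈ Finset.Ico N t, ε' * w i := by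
          apply Finset.sum_le_sum
          intro i hi
          exact mul_le_mul_of_nonneg_right (le_of_lt (hN i (Finset.mem_Ico.1 hi).1)) (hw0 i)
      _ = ε' * ∑ i ∈ Finset.Ico N t, w i := by rw [Finset.mul_sum]
      _ ≤ ε' * ∑ i ∈ Finset.range t, w i := by
          apply mul_le_mul_of_nonneg_left _ hε'.le
          rw [Finset.range_eq_Ico]
          exact Finset.sum_le_sum_of_subset_of_nonneg
            (Finset.Ico_subset_Ico (Nat.zero_le N) le_rfl) (fun i _ _ => hw0 i)
  have hnn : 0 ≤ (1 / (t : ℝ)) * ∑ i ∈ Finset.range t, δ i * w i :=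
    mul_nonneg ht0 (Finset.sum_nonneg fun i _ => mul_nonneg (hδ0 i) (hw0 i))
  rw [Real.norm_eq_abs, abs_of_nonneg hnn]
  calc (1 / (t : ℝ)) * ∑ i ∈ Finset.range t, δ i * w i
      = (1 / (t : ℝ)) * ∑ i ∈ Finset.range N, δ i * w i
        + (1 / (t : ℝ)) * ∑ i ∈ Finset.Ico N t, δ i * w i := by rw [hsplit, mul_add]
    _ ≤ (1 / (t : ℝ)) * ∑ i ∈ Finset.range N, δ i * w i
        + ε' * ((1 / (t : ℝ)) * ∑ i ∈ Finset.range t, w i) := by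
          have := mul_le_mul_of_nonneg_left htail ht0
          nlinarith
    _ < ε / 2 + ε' * (q + 1) := by
          have hlt : ε' * ((1 / (t : ℝ)) * ∑ i ∈ Finset.range t, w i) ≤ ε' * (q + 1) :=
            mul_le_mul_of_nonneg_left h1.le hε'.le
          linarith
    _ = ε := by rw [hε'def, div_mul_eq_mul_div, mul_div_mul_right _ _ hq1.ne']; ring

/-- Let `(X_t)_{t ≥ 1}` be i.i.d. `𝒳`-valued random variables, `H` a separable real Hilbert
space, `ξ : 𝒳 → H` strongly measurable, and `h(x, y) = ⟪ξ x, ξ y⟫`. Let `M : 𝒳 → (0, ∞)`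
be measurable with `h(x, y) ≥ -M(x)` for all `x, y`, and define payoffs
`g_t(x) = (∑_{i=1}^{t-1} h(X_i, x)) / (∑_{i=1}^{t-1} M(X_i))` (so `g_1 = 0`). If
`E ‖ξ(X₁)‖² < ∞` and `E M(X₁) < ∞`, then, with `g*(x) = E[h(X₁, x)] / E[M(X₁)]`, almost
surely `(1/t) ∑_{i=1}^t g_i(X_i)² → E[g*(X₁)²]`. -/
theorem payoff_second_order_slln
    {Ω : Type*} {mΩ : MeasurableSpace Ω} {P : Measure Ω} [IsProbabilityMeasure P]
    {𝒳 : Type*} {m𝒳 : MeasurableSpace 𝒳}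
    (X : ℕ → Ω → 𝒳) (hXmeas : ∀ i, Measurable (X i))
    (hXindep : iIndepFun (m := fun _ => m𝒳) X P)
    (hXident : ∀ i, Measure.map (X i) P = Measure.map (X 1) P)
    {H : Type*} [NormedAddCommGroup H] [InnerProductSpace ℝ H] [CompleteSpace H]
    [SecondCountableTopology H]
    (ξ : 𝒳 → H) (hξ : StronglyMeasurable ξ)
    (M : 𝒳 → ℝ) (hMmeas : Measurable M) (hMpos : ∀ x, 0 < M x)
    (hMbound : ∀ x y, -(M x) ≤ ⟪ξ x, ξ y⟫)
    (g : ℕ → Ω → 𝒳 → ℝ)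
    (hg : ∀ t ω x, g t ω x =
      (∑ i ∈ Finset.Icc 1 (t - 1), ⟪ξ (X i ω), ξ x⟫) /
        (∑ i ∈ Finset.Icc 1 (t - 1), M (X i ω)))
    (hnormsq_int : Integrable (fun ω => ‖ξ (X 1 ω)‖ ^ 2) P)
    (hM_int : Integrable (fun ω => M (X 1 ω)) P)
    (gstar : 𝒳 → ℝ)
    (hgstar : ∀ x, gstar x = (∫ ω, ⟪ξ (X 1 ω), ξ x⟫ ∂P) / ∫ ω, M (X 1 ω) ∂P) :
    ∀ᵐ ω ∂P,
      Tendsto (fun t : ℕ => (1 / (t : ℝ)) * ∑ i ∈ Finset.Icc 1 t, (g i ω (X i ω)) ^ 2)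
        atTop (𝓝 (∫ ω', (gstar (X 1 ω')) ^ 2 ∂P)) := by
  letI : MeasurableSpace H := borel H
  haveI : BorelSpace H := ⟨rfl⟩
  have hξm : Measurable ξ := hξ.measurable
  have hid : ∀ i, IdentDistrib (X i) (X 1) P P := fun i =>
    ⟨(hXmeas i).aemeasurable, (hXmeas 1).aemeasurable, by rw [hXident i]⟩
  -- integrability of ξ ∘ X 1
  have hξint : Integrable (fun ω => ξ (X 1 ω)) P := by
    apply Integrable.mono' ((integrable_const (1:ℝ)).add hnormsq_int)
      ((hξ.comp_measurable (hXmeas 1)).aestronglyMeasurable)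
    filter_upwards with ω
    show ‖ξ (X 1 ω)‖ ≤ 1 + ‖ξ (X 1 ω)‖ ^ 2
    nlinarith [norm_nonneg (ξ (X 1 ω)), sq_nonneg (‖ξ (X 1 ω)‖ - 1)]
  set μH : H := ∫ ω, ξ (X 1 ω) ∂P with hμH
  set m : ℝ := ∫ ω, M (X 1 ω) ∂P with hmdef
  have hm : 0 < m := by
    rw [hmdef, integral_pos_iff_support_of_nonneg_ae
      (Filter.Eventually.of_forall fun ω => (hMpos (X 1 ω)).le) hM_int]
    have : Function.support (fun ω => M (X 1 ω)) = Set.univ := by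
      ext ω; simp [Function.mem_support, (hMpos (X 1 ω)).ne']
    rw [this]
    simp
  set c : H := m⁻¹ • μH with hcdef
  have hgs : ∀ x, gstar x = ⟪c, ξ x⟫ := by
    intro x
    rw [hgstar x]
    have h1 : (∫ ω, ⟪ξ (X 1 ω), ξ x⟫ ∂P) = ⟪ξ x, μH⟫ := by
      rw [hμH, ← integral_inner hξint (ξ x)]
      exact integral_congr_ae (Filter.Eventually.of_forall fun ω => real_inner_comm _ _)
    rw [h1, hcdef, real_inner_smul_left, real_inner_comm, div_eq_inv_mul]
  -- real strong law helper for compositions f ∘ X (i+1)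
  have slln_real : ∀ (f : 𝒳 → ℝ), Measurable f → Integrable (fun ω => f (X 1 ω)) P →
      ∀ᵐ ω ∂P, Tendsto
        (fun n : ℕ => (1 / (n : ℝ)) * ∑ i ∈ Finset.range n, f (X (i + 1) ω)) atTop
        (𝓝 (∫ ω', f (X 1 ω') ∂P)) := by
    intro f hf hfint
    have h := strong_law_ae_real (fun i ω => f (X (i + 1) ω)) hfint
      (fun i j hij => (hXindep.indepFun (show i + 1 ≠ j + 1 by omega)).comp hf hf)
      (fun i => (hid (i + 1)).comp hf)
    filter_upwards [h] with ω hω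
    have : ∀ n : ℕ, (∑ i ∈ Finset.range n, f (X (i + 1) ω)) / (n : ℝ)
        = (1 / (n : ℝ)) * ∑ i ∈ Finset.range n, f (X (i + 1) ω) := fun n => by
      rw [one_div, inv_mul_eq_div]
    exact (Tendsto.congr this hω)
  -- vector strong law
  have E1 : ∀ᵐ ω ∂P, Tendsto
      (fun n : ℕ => (n : ℝ)⁻¹ • ∑ i ∈ Finset.range n, ξ (X (i + 1) ω)) atTop (𝓝 μH) := by
    have h := strong_law_ae (μ := P) (fun i ω => ξ (X (i + 1) ω))
      hξint
      (fun i j hij => (hXindep.indepFun (show i + 1 ≠ j + 1 by omega)).comp hξm hξm)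
      (fun i => (hid (i + 1)).comp hξm)
    exact h
  have E2 := slln_real M hMmeas hM_int
  have E3 := slln_real (fun x => ‖ξ x‖ ^ 2) (hξm.norm.pow_const 2) hnormsq_int
  have hgsint : Integrable (fun ω => gstar (X 1 ω) ^ 2) P := by
    apply Integrable.mono' (hnormsq_int.const_mul (‖c‖ ^ 2))
    · have : Measurable fun x => gstar x ^ 2 := by
        have : (fun x => gstar x ^ 2) = fun x => ⟪c, ξ x⟫ ^ 2 := by
          funext x; rw [hgs x]
        rw [this]
        exact (measurable_const.inner hξm).pow_const 2
      exact (this.comp (hXmeas 1)).aestronglyMeasurable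
    · filter_upwards with ω
      rw [hgs]
      have h1 := abs_real_inner_le_norm c (ξ (X 1 ω))
      have h2 := abs_nonneg ⟪c, ξ (X 1 ω)⟫
      rw [Real.norm_eq_abs, abs_of_nonneg (sq_nonneg _), ← sq_abs]
      nlinarith [norm_nonneg c, norm_nonneg (ξ (X 1 ω))]
  have E4 := slln_real (fun x => gstar x ^ 2)
    (by
      have hmeq : (fun x => gstar x ^ 2) = fun x => ⟪c, ξ x⟫ ^ 2 := by
        funext x; rw [hgs x]
      rw [hmeq]
      exact (measurable_const.inner hξm).pow_const 2) hgsint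
  filter_upwards [E1, E2, E3, E4] with ω h1 h2 h3 h4
  set u : ℕ → H := fun n => (n : ℝ)⁻¹ • ∑ j ∈ Finset.range n, ξ (X (j + 1) ω) with hudef
  set v : ℕ → ℝ := fun n => (1 / (n : ℝ)) * ∑ j ∈ Finset.range n, M (X (j + 1) ω) with hvdef
  have hvpos : ∀ n : ℕ, 1 ≤ n → 0 < v n := by
    intro n hn
    have hn0 : (0 : ℝ) < (n : ℝ) := by exact_mod_cast hn
    exact mul_pos (by positivity)
      (Finset.sum_pos (fun i _ => hMpos _) (Finset.nonempty_range_iff.2 (by omega)))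
  set wv : ℕ → H := fun n => (v n)⁻¹ • u n with hwvdef
  have hwv : Tendsto wv atTop (𝓝 c) := by
    rw [hcdef]
    exact (h2.inv₀ hm.ne').smul h1
  set d : ℕ → ℝ := fun n => ‖wv n - c‖ with hddef
  have hd : Tendsto d atTop (𝓝 0) := by
    have := (hwv.sub (tendsto_const_nhds (x := c))).norm
    simpa using this
  set K : ℝ := ‖c‖ with hKdef
  have hK0 : 0 ≤ K := norm_nonneg c
  set φ : ℕ → ℝ := fun n => d n * (d n + 2 * K) with hφdef
  have hφ0 : ∀ n, 0 ≤ φ n := fun n =>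
    mul_nonneg (norm_nonneg _) (by positivity)
  have hφ : Tendsto φ atTop (𝓝 0) := by
    have := hd.mul (hd.add (tendsto_const_nhds (x := 2 * K)))
    simpa using this
  -- key pointwise bound
  have key : ∀ i : ℕ, 1 ≤ i →
      |(g i ω (X i ω)) ^ 2 - (gstar (X i ω)) ^ 2| ≤ φ (i - 1) * ‖ξ (X i ω)‖ ^ 2 := by
    intro i hi
    by_cases hi1 : i = 1
    · subst hi1
      have hg1 : g 1 ω (X 1 ω) = 0 := by
        rw [hg]; simp
      have hd0 : d 0 = K := by
        simp [hddef, hwvdef, hudef, hKdef]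
      have hb := abs_real_inner_le_norm c (ξ (X 1 ω))
      rw [hg1, hgs]
      simp only [Nat.sub_self, hφdef, hd0]
      rw [zero_pow (by norm_num), zero_sub, abs_neg, abs_of_nonneg (sq_nonneg _), ← sq_abs]
      nlinarith [abs_nonneg ⟪c, ξ (X 1 ω)⟫, norm_nonneg (ξ (X 1 ω))]
    · set n : ℕ := i - 1 with hndef
      have hn1 : 1 ≤ n := by omega
      have hin : i = n + 1 := by omega
      have hn0 : ((n : ℝ)) ≠ 0 := by
        have : (0:ℝ) < n := by exact_mod_cast hn1
        linarith
      set x : 𝒳 := X i ω with hxdef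
      set Sn : H := ∑ j ∈ Finset.range n, ξ (X (j + 1) ω) with hSndef
      set Tn : ℝ := ∑ j ∈ Finset.range n, M (X (j + 1) ω) with hTndef
      have hTnpos : 0 < Tn :=
        Finset.sum_pos (fun i _ => hMpos _) (Finset.nonempty_range_iff.2 (by omega))
      have ha : g i ω x = ⟪wv n, ξ x⟫ := by
        rw [hg, hin]
        simp only [Nat.add_sub_cancel]
        rw [sum_Icc_one_eq (fun j => ⟪ξ (X j ω), ξ x⟫) n,
          sum_Icc_one_eq (fun j => M (X j ω)) n]
        rw [show (∑ j ∈ Finset.range n, ⟪ξ (X (j + 1) ω), ξ x⟫) = ⟪Sn, ξ x⟫ by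
          rw [hSndef, sum_inner]]
        rw [hwvdef, hudef, hvdef, real_inner_smul_left, real_inner_smul_left]
        field_simp
        rw [hSndef]
      have hb : gstar x = ⟪c, ξ x⟫ := hgs x
      have e1 : |g i ω x - gstar x| ≤ d n * ‖ξ x‖ := by
        rw [ha, hb, ← inner_sub_left]
        exact abs_real_inner_le_norm _ _
      have e2 : |g i ω x + gstar x| ≤ (d n + 2 * K) * ‖ξ x‖ := by
        rw [ha, hb, ← inner_add_left]
        calc |⟪wv n + c, ξ x⟫| ≤ ‖wv n + c‖ * ‖ξ x‖ := abs_real_inner_le_norm _ _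
          _ ≤ (d n + 2 * K) * ‖ξ x‖ := by
              apply mul_le_mul_of_nonneg_right _ (norm_nonneg _)
              have : wv n + c = (wv n - c) + c + c := by abel
              rw [this]
              calc ‖wv n - c + c + c‖ ≤ ‖wv n - c + c‖ + ‖c‖ := norm_add_le _ _
                _ ≤ ‖wv n - c‖ + ‖c‖ + ‖c‖ := by
                    have := norm_add_le (wv n - c) c
                    linarith
                _ = d n + 2 * K := by rw [hddef, hKdef]; ring
      calc |(g i ω x) ^ 2 - (gstar x) ^ 2|
          = |g i ω x - gstar x| * |g i ω x + gstar x| := by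
            rw [← abs_mul]; ring_nf
        _ ≤ (d n * ‖ξ x‖) * ((d n + 2 * K) * ‖ξ x‖) := by
            apply mul_le_mul e1 e2 (abs_nonneg _)
            positivity
        _ = φ n * ‖ξ x‖ ^ 2 := by rw [hφdef]; ring
  -- assemble
  have hGt : Tendsto (fun t : ℕ => (1 / (t : ℝ)) * ∑ i ∈ Finset.Icc 1 t,
      (gstar (X i ω)) ^ 2) atTop (𝓝 (∫ ω', (gstar (X 1 ω')) ^ 2 ∂P)) := by
    apply Tendsto.congr _ h4
    intro t
    rw [sum_Icc_one_eq (fun i => (gstar (X i ω)) ^ 2) t]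
  have hDt : Tendsto (fun t : ℕ => (1 / (t : ℝ)) * ∑ i ∈ Finset.Icc 1 t,
      ((g i ω (X i ω)) ^ 2 - (gstar (X i ω)) ^ 2)) atTop (𝓝 0) := by
    have hcesaro := weighted_cesaro φ (fun j => ‖ξ (X (j + 1) ω)‖ ^ 2) hφ0
        (fun j => by positivity) hφ h3
    refine squeeze_zero_norm ?_ hcesaro
    · intro t
      have ht0 : (0:ℝ) ≤ 1 / (t : ℝ) := by positivity
      rw [Real.norm_eq_abs, abs_mul, abs_of_nonneg ht0]
      have habs : |∑ i ∈ Finset.Icc 1 t, ((g i ω (X i ω)) ^ 2 - (gstar (X i ω)) ^ 2)|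
          ≤ ∑ i ∈ Finset.Icc 1 t, φ (i - 1) * ‖ξ (X i ω)‖ ^ 2 := by
        refine le_trans (Finset.abs_sum_le_sum_abs _ _) ?_
        apply Finset.sum_le_sum
        intro i hi
        exact key i (Finset.mem_Icc.1 hi).1
      have hre : ∑ i ∈ Finset.Icc 1 t, φ (i - 1) * ‖ξ (X i ω)‖ ^ 2
          = ∑ j ∈ Finset.range t, φ j * ‖ξ (X (j + 1) ω)‖ ^ 2 := by
        rw [sum_Icc_one_eq (fun i => φ (i - 1) * ‖ξ (X i ω)‖ ^ 2) t]
        exact Finset.sum_congr rfl fun j _ => by simp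
      rw [← hre]
      exact mul_le_mul_of_nonneg_left habs ht0
  have := hGt.add hDt
  rw [add_zero] at this
  apply Tendsto.congr _ this
  intro t
  rw [← mul_add, ← Finset.sum_add_distrib]
  congr 1
  exact Finset.sum_congr rfl fun i _ => by ring
end

section
/- Let d ≥ 3 and d_h ≥ 1, let B be a real d × d_h matrix with operator norm ‖B‖_op, let b ∈ ℝ^d and c ∈ ℝ^{d_h}, and define s : ℝ^d → ℝ^d by s(x) = b − x + (1/2)·B·φ((1/2)·Bᵀx + c), where φ applies tanh entrywise. Define h_p : ℝ^d × ℝ^d → ℝ by h_p(x, x̃) = ⟨s(x), s(x̃)⟩·(1 + ‖x − x̃‖²)^{−1/2} + (1 + ‖x − x̃‖²)^{−3/2}·⟨s(x̃) − s(x), x − x̃⟩ + (−3(1 + ‖x − x̃‖²)^{−5/2}·‖x − x̃‖² + d·(1 + ‖x − x̃‖²)^{−3/2}). Then for all x, x̃ ∈ ℝ^d, h_p(x, x̃) ≥ −((‖s(x̃)‖ + 1 + ‖B‖_op·√(d_h))·‖s(x̃)‖ + ‖B‖_op·√(d_h) + 1). -/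
open scoped RealInnerProductSpace

/-- Entrywise hyperbolic tangent `φ(y)_i = tanh (y_i) = (e^{2 y_i} - 1)/(e^{2 y_i} + 1)`. -/
noncomputable def entrywiseTanh {n : ℕ} (y : EuclideanSpace ℝ (Fin n)) :
    EuclideanSpace ℝ (Fin n) :=
  WithLp.toLp 2 (fun i => Real.tanh (y i))

/-- The score function of the Gaussian-Bernoulli restricted Boltzmann machine:
`s(x) = b - x + (1/2) B φ((1/2) Bᵀ x + c)`, with `φ` applying `tanh` entrywise. -/
noncomputable def rbmScore {d dh : ℕ} (B : Matrix (Fin d) (Fin dh) ℝ)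
    (b : EuclideanSpace ℝ (Fin d)) (c : EuclideanSpace ℝ (Fin dh))
    (x : EuclideanSpace ℝ (Fin d)) : EuclideanSpace ℝ (Fin d) :=
  b - x + (1 / 2 : ℝ) •
    Matrix.toEuclideanLin B (entrywiseTanh ((1 / 2 : ℝ) • Matrix.toEuclideanLin B.transpose x + c))

lemma tanh_sq_le_one (t : ℝ) : Real.tanh t ^ 2 ≤ 1 := by
  have hc := Real.cosh_pos t
  have hs := Real.cosh_sq t
  rw [Real.tanh_eq_sinh_div_cosh, div_pow, div_le_one (by positivity)]
  nlinarith

lemma norm_entrywiseTanh_le {n : ℕ} (y : EuclideanSpace ℝ (Fin n)) :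
    ‖entrywiseTanh y‖ ≤ Real.sqrt n := by
  rw [EuclideanSpace.norm_eq]
  apply Real.sqrt_le_sqrt
  calc ∑ i, ‖entrywiseTanh y i‖ ^ 2 ≤ ∑ _i : Fin n, (1 : ℝ) := by
        apply Finset.sum_le_sum
        intro i _
        have := tanh_sq_le_one (y i)
        simpa [entrywiseTanh, Real.norm_eq_abs, sq_abs] using this
    _ = n := by simp

lemma imq_scalar_bound (N M r X W dR : ℝ) (hN : 0 ≤ N) (hM0 : 0 ≤ M) (hr0 : 0 ≤ r)
    (hd3 : 3 ≤ dR) (hX : -((N + r + M) * N) ≤ X) (hW : r ^ 2 - M * r ≤ W) :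
    -((N + 1 + M) * N + M + 1) ≤
      X * (1 + r ^ 2) ^ (-(1 / 2) : ℝ) + (1 + r ^ 2) ^ (-(3 / 2) : ℝ) * W
        + (-3 * (1 + r ^ 2) ^ (-(5 / 2) : ℝ) * r ^ 2 + dR * (1 + r ^ 2) ^ (-(3 / 2) : ℝ)) := by
  have hu0 : (0 : ℝ) < 1 + r ^ 2 := by positivity
  have hu1 : (1 : ℝ) ≤ 1 + r ^ 2 := by linarith [sq_nonneg r]
  set t := (1 + r ^ 2) ^ (-(1 / 2) : ℝ) with ht
  have ht0 : 0 < t := Real.rpow_pos_of_pos hu0 _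
  have ht1 : t ≤ 1 := Real.rpow_le_one_of_one_le_of_nonpos hu1 (by norm_num)
  have htu : t ^ 2 * (1 + r ^ 2) = 1 := by
    have h1 : t ^ 2 = (1 + r ^ 2) ^ (-1 : ℝ) := by
      rw [ht, ← Real.rpow_natCast ((1 + r ^ 2) ^ (-(1 / 2) : ℝ)) 2, ← Real.rpow_mul hu0.le]
      norm_num
    rw [h1, Real.rpow_neg_one]
    field_simp
  have h32 : (1 + r ^ 2) ^ (-(3 / 2) : ℝ) = t ^ 3 := by
    rw [ht, ← Real.rpow_natCast ((1 + r ^ 2) ^ (-(1 / 2) : ℝ)) 3, ← Real.rpow_mul hu0.le]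
    norm_num
  have h52 : (1 + r ^ 2) ^ (-(5 / 2) : ℝ) = t ^ 5 := by
    rw [ht, ← Real.rpow_natCast ((1 + r ^ 2) ^ (-(1 / 2) : ℝ)) 5, ← Real.rpow_mul hu0.le]
    norm_num
  rw [h32, h52]
  have hrt : r * t ≤ 1 := by nlinarith [mul_nonneg hr0 ht0.le]
  have hT1 : -((N + 1 + M) * N) ≤ X * t := by
    have hXt : -((N + r + M) * N) * t ≤ X * t := mul_le_mul_of_nonneg_right hX ht0.le
    nlinarith [mul_le_of_le_one_right hN ht1, mul_le_of_le_one_right hM0 ht1,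
      mul_le_mul_of_nonneg_right hrt hN, mul_nonneg (mul_nonneg hr0 ht0.le) hN]
  have htr3 : t ^ 3 * r ≤ 1 := by
    nlinarith [mul_nonneg (sub_nonneg.mpr hrt) (sq_nonneg t), ht0.le, ht1]
  have hT2 : -M ≤ t ^ 3 * W := by
    have h1 : t ^ 3 * (r ^ 2 - M * r) ≤ t ^ 3 * W :=
      mul_le_mul_of_nonneg_left hW (by positivity)
    nlinarith [mul_le_mul_of_nonneg_left htr3 hM0,
      mul_nonneg (pow_nonneg ht0.le 3) (sq_nonneg r)]
  have h5 : t ^ 5 * r ^ 2 = t ^ 3 - t ^ 5 := by linear_combination t ^ 3 * htu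
  have hT3 : (0 : ℝ) ≤ -3 * t ^ 5 * r ^ 2 + dR * t ^ 3 := by
    nlinarith [h5, pow_pos ht0 3, pow_pos ht0 5]
  linarith [hT1, hT2, hT3]

set_option maxHeartbeats 1000000 in
/-- For the RBM score `s` on `ℝ^d` with `d ≥ 3`, `dh ≥ 1`, the Langevin Stein kernel with IMQ
base kernel satisfies
`h_p(x, y) ≥ -((‖s(y)‖ + 1 + ‖B‖_op √dh) ‖s(y)‖ + ‖B‖_op √dh + 1)` for all `x, y`
(`y` playing the role of `x̃`), where `‖B‖_op` is the operator norm of `B` with respect to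
Euclidean norms. -/
theorem rbm_stein_kernel_lower_bound (d dh : ℕ) (hd : 3 ≤ d) (hdh : 1 ≤ dh)
    (B : Matrix (Fin d) (Fin dh) ℝ)
    (b : EuclideanSpace ℝ (Fin d)) (c : EuclideanSpace ℝ (Fin dh))
    (s : EuclideanSpace ℝ (Fin d) → EuclideanSpace ℝ (Fin d))
    (hs : ∀ x, s x = rbmScore B b c x)
    (h : EuclideanSpace ℝ (Fin d) → EuclideanSpace ℝ (Fin d) → ℝ)
    (hh : ∀ x y, h x y =
      ⟪s x, s y⟫ * (1 + ‖x - y‖ ^ 2) ^ (-(1 / 2) : ℝ)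
        + (1 + ‖x - y‖ ^ 2) ^ (-(3 / 2) : ℝ) * ⟪s y - s x, x - y⟫
        + (-3 * (1 + ‖x - y‖ ^ 2) ^ (-(5 / 2) : ℝ) * ‖x - y‖ ^ 2
            + d * (1 + ‖x - y‖ ^ 2) ^ (-(3 / 2) : ℝ))) :
    ∀ x y,
      -((‖s y‖ + 1 + ‖LinearMap.toContinuousLinearMap (Matrix.toEuclideanLin B)‖ * Real.sqrt dh)
            * ‖s y‖
          + ‖LinearMap.toContinuousLinearMap (Matrix.toEuclideanLin B)‖ * Real.sqrt dh + 1)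
        ≤ h x y := by
  intro x y
  set L := LinearMap.toContinuousLinearMap (Matrix.toEuclideanLin B) with hL
  set M := ‖L‖ * Real.sqrt dh with hMdef
  have hM0 : 0 ≤ M := mul_nonneg (norm_nonneg _) (Real.sqrt_nonneg _)
  -- bound on the nonlinear part of the score
  have hq : ∀ z : EuclideanSpace ℝ (Fin d),
      ‖(1 / 2 : ℝ) • Matrix.toEuclideanLin B
        (entrywiseTanh ((1 / 2 : ℝ) • Matrix.toEuclideanLin B.transpose z + c))‖ ≤ M / 2 := by
    intro z
    set w := entrywiseTanh ((1 / 2 : ℝ) • Matrix.toEuclideanLin B.transpose z + c) with hw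
    have h2 : Matrix.toEuclideanLin B w = L w := rfl
    rw [norm_smul, h2]
    have h3 : ‖L w‖ ≤ ‖L‖ * Real.sqrt dh := by
      calc ‖L w‖ ≤ ‖L‖ * ‖w‖ := L.le_opNorm w
        _ ≤ ‖L‖ * Real.sqrt dh := by
            gcongr
            exact norm_entrywiseTanh_le _
    have : ‖(1 / 2 : ℝ)‖ = 1 / 2 := by norm_num [Real.norm_eq_abs]
    rw [this]
    rw [hMdef]
    linarith
  set qx := (1 / 2 : ℝ) • Matrix.toEuclideanLin B
      (entrywiseTanh ((1 / 2 : ℝ) • Matrix.toEuclideanLin B.transpose x + c)) with hqxdef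
  set qy := (1 / 2 : ℝ) • Matrix.toEuclideanLin B
      (entrywiseTanh ((1 / 2 : ℝ) • Matrix.toEuclideanLin B.transpose y + c)) with hqydef
  have hqx : ‖qx‖ ≤ M / 2 := hq x
  have hqy : ‖qy‖ ≤ M / 2 := hq y
  have hsx : s x = b - x + qx := by rw [hs x]; rfl
  have hsy : s y = b - y + qy := by rw [hs y]; rfl
  have hdiff : s y - s x = (x - y) + (qy - qx) := by rw [hsx, hsy]; abel
  have hsx_le : ‖s x‖ ≤ ‖s y‖ + ‖x - y‖ + M := by
    have hx' : s x = s y - ((x - y) + (qy - qx)) := by rw [← hdiff]; abel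
    calc ‖s x‖ = ‖s y - ((x - y) + (qy - qx))‖ := by rw [← hx']
      _ ≤ ‖s y‖ + ‖(x - y) + (qy - qx)‖ := norm_sub_le _ _
      _ ≤ ‖s y‖ + (‖x - y‖ + ‖qy - qx‖) := by
          have := norm_add_le (x - y) (qy - qx); linarith
      _ ≤ ‖s y‖ + ‖x - y‖ + M := by
          have := norm_sub_le qy qx; linarith
  have hinner1 : -(‖s x‖ * ‖s y‖) ≤ ⟪s x, s y⟫ := by
    have h1 := abs_real_inner_le_norm (s x) (s y)
    have h2 := neg_abs_le ⟪s x, s y⟫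
    linarith
  have hinner2 : ‖x - y‖ ^ 2 - M * ‖x - y‖ ≤ ⟪s y - s x, x - y⟫ := by
    rw [hdiff, inner_add_left, real_inner_self_eq_norm_sq]
    have h1 := abs_real_inner_le_norm (qy - qx) (x - y)
    have h2 := neg_abs_le ⟪qy - qx, x - y⟫
    have h3 : ‖qy - qx‖ ≤ M := by have := norm_sub_le qy qx; linarith
    have h4 : ‖qy - qx‖ * ‖x - y‖ ≤ M * ‖x - y‖ :=
      mul_le_mul_of_nonneg_right h3 (norm_nonneg _)
    linarith
  rw [hh x y]
  have hd3 : (3 : ℝ) ≤ (d : ℝ) := by exact_mod_cast hd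
  have hN : 0 ≤ ‖s y‖ := norm_nonneg _
  have hX : -((‖s y‖ + ‖x - y‖ + M) * ‖s y‖) ≤ ⟪s x, s y⟫ := by
    have h2 : ‖s x‖ * ‖s y‖ ≤ (‖s y‖ + ‖x - y‖ + M) * ‖s y‖ :=
      mul_le_mul_of_nonneg_right hsx_le hN
    linarith
  exact imq_scalar_bound ‖s y‖ M ‖x - y‖ _ _ _ hN hM0 (norm_nonneg _) hd3 hX hinner2
end
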